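/- Let c_n denote the number of C-equivalence classes of paths of length n in ℰ. Then c_0 = 1, c_1 = 0, and c_n = c_{n−1} + c_{n−2} for all n ≥ 2. -/

import Mathlib

/-- Steps of a Dyck path with catastrophes: up-step `U`, down-step `D`,
and catastrophe step `C k` of size `k` (valid paths only use `k ≥ 2`). -/
inductive Step where
  | U : Step
  | D : Step
  | C : ℕ → Step
  deriving DecidableEq

/-- The vertical displacement of a step. -/
def Step.val : Step → ℤ
  | .U => 1
  | .D => -1
  | .C k => -(k : ℤ)

/-- The height (ordinate) of the path after its first `i` steps. -/
def hgt (P : List Step) (i : ℕ) : ℤ := ((P.take i).map Step.val).sum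

/-- `InE P` means `P` is a Dyck path with catastrophes (a member of ℰ):
it stays at height ≥ 0, ends on the x-axis, and every catastrophe step
`C k` has `k ≥ 2` and starts at height `k` (hence ends on the x-axis). -/
def InE (P : List Step) : Prop :=
  (∀ i, 0 ≤ hgt P i) ∧ hgt P P.length = 0 ∧
    ∀ i k, P[i]? = some (Step.C k) → 2 ≤ k ∧ hgt P i = (k : ℤ)

/-- `(UD)^k`. -/
def UDpow (k : ℕ) : List Step := (List.replicate k [Step.U, Step.D]).flatten

/-- `(DU)^k`. -/
def DUpow (k : ℕ) : List Step := (List.replicate k [Step.D, Step.U]).flatten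

/-- `U^k`. -/
def Upow (k : ℕ) : List Step := List.replicate k Step.U

/-- `C_s` with the convention `C_1 = D`. -/
def cfin (s : ℕ) : Step := if s = 1 then Step.D else Step.C s

/-- Test whether a step is a catastrophe step. -/
def isCatB : Step → Bool
  | .C _ => true
  | _ => false

/-- The number of catastrophe steps in a path. -/
def catCount (P : List Step) : ℕ := P.countP isCatB

/-- The number of equivalence classes, for the equivalence `E`, of paths of
length `n` in ℰ. -/
noncomputable def nClasses (E : List Step → List Step → Prop) (n : ℕ) : ℕ :=
  Nat.card (Quot (fun P Q : {P : List Step // InE P ∧ P.length = n} => E P.1 Q.1))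

/-- Two paths are `C`-equivalent when, for every `k ≥ 2`, the catastrophe
steps `C k` occur at the same positions in both paths. -/
def CEquiv (P Q : List Step) : Prop :=
  ∀ k, 2 ≤ k → ∀ i : ℕ, P[i]? = some (Step.C k) ↔ Q[i]? = some (Step.C k)

/-! ### Basic lemmas on `hgt` and `sig` -/

def stepSig : Step → Option ℕ
  | .C k => some k
  | _ => none

def sig (P : List Step) : List (Option ℕ) := P.map stepSig

@[simp] lemma sig_length (P : List Step) : (sig P).length = P.length := by
  simp [sig]

@[simp] lemma sig_append (P Q : List Step) : sig (P ++ Q) = sig P ++ sig Q := by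
  simp [sig]

@[simp] lemma sig_nil : sig [] = [] := rfl

lemma sig_getElem? (P : List Step) (i : ℕ) : (sig P)[i]? = P[i]?.map stepSig := by
  simp [sig]

@[simp] lemma hgt_zero (P : List Step) : hgt P 0 = 0 := by simp [hgt]

lemma hgt_succ (P : List Step) (i : ℕ) :
    hgt P (i + 1) = hgt P i + ((P[i]?.map Step.val).getD 0) := by
  simp [hgt, List.take_succ]
  cases h : P[i]? <;> simp

lemma hgt_append_left (A B : List Step) (i : ℕ) (h : i ≤ A.length) :
    hgt (A ++ B) i = hgt A i := by
  simp [hgt, List.take_append_of_le_length h]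

lemma hgt_append_right (A B : List Step) (j : ℕ) :
    hgt (A ++ B) (A.length + j) = hgt A A.length + hgt B j := by
  simp [hgt, List.take_append]
  rw [List.take_of_length_le (by simp)]

lemma hgt_of_length_le (P : List Step) (i : ℕ) (h : P.length ≤ i) :
    hgt P i = hgt P P.length := by
  simp [hgt, List.take_of_length_le h]

lemma hgt_length_append (A B : List Step) :
    hgt (A ++ B) (A ++ B).length = hgt A A.length + hgt B B.length := by
  rw [List.length_append, hgt_append_right]

/-! ### `InE` closure lemmas -/

lemma InE_nil : InE ([] : List Step) := by
  refine ⟨fun i => by simp [hgt], by simp [hgt], fun i k h => by simp at h⟩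

lemma InE_append {A B : List Step} (hA : InE A) (hB : InE B) : InE (A ++ B) := by
  obtain ⟨hA1, hA2, hA3⟩ := hA
  obtain ⟨hB1, hB2, hB3⟩ := hB
  refine ⟨?_, ?_, ?_⟩
  · intro i
    rcases le_or_gt i A.length with h | h
    · rw [hgt_append_left _ _ _ h]; exact hA1 i
    · obtain ⟨j, rfl⟩ : ∃ j, i = A.length + j := ⟨i - A.length, by omega⟩
      rw [hgt_append_right, hA2, zero_add]; exact hB1 j
  · rw [hgt_length_append, hA2, hB2, add_zero]
  · intro i k h
    rcases lt_or_ge i A.length with hi | hi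
    · rw [List.getElem?_append] at h
      simp only [hi, if_pos] at h
      exact (hA3 i k h).imp id (by rw [hgt_append_left _ _ _ hi.le] at *; exact id)
    · obtain ⟨j, rfl⟩ : ∃ j, i = A.length + j := ⟨i - A.length, by omega⟩
      rw [List.getElem?_append_right (by omega)] at h
      simp only [Nat.add_sub_cancel_left] at h
      have := hB3 j k h
      rw [hgt_append_right, hA2, zero_add]
      exact this

lemma InE_prefix {A B : List Step} (h : InE (A ++ B)) (h0 : hgt (A ++ B) A.length = 0) :
    InE A := by
  obtain ⟨h1, h2, h3⟩ := h
  have key : ∀ i, i ≤ A.length → hgt A i = hgt (A ++ B) i := fun i hi =>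
    (hgt_append_left A B i hi).symm
  refine ⟨?_, ?_, ?_⟩
  · intro i
    rcases le_or_gt i A.length with hi | hi
    · rw [key i hi]; exact h1 i
    · rw [hgt_of_length_le _ _ hi.le, key _ le_rfl, h0]
  · rw [key _ le_rfl, h0]
  · intro i k hk
    have hi : i < A.length := by
      by_contra hc
      rw [List.getElem?_eq_none (by omega)] at hk
      simp at hk
    have : (A ++ B)[i]? = some (Step.C k) := by
      rw [List.getElem?_append_left hi]; exact hk
    have := h3 i k this
    rwa [← key i hi.le] at this

/-! ### Catastrophe-free segments -/

lemma val_of_not_cat {s : Step} (h : isCatB s = false) : s.val = 1 ∨ s.val = -1 := by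
  cases s <;> simp_all [isCatB, Step.val]

lemma catfree_sum_parity (T : List Step) (h : ∀ s ∈ T, isCatB s = false) :
    (T.map Step.val).sum % 2 = (T.length : ℤ) % 2 := by
  induction T with
  | nil => simp
  | cons a T ih =>
    have ha := val_of_not_cat (h a (by simp))
    have := ih (fun s hs => h s (by simp [hs]))
    simp only [List.map_cons, List.sum_cons, List.length_cons]
    rcases ha with ha | ha <;> rw [ha] <;> push_cast <;> omega

lemma catfree_sum_le (T : List Step) (h : ∀ s ∈ T, isCatB s = false) :
    (T.map Step.val).sum ≤ (T.length : ℤ) := by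
  induction T with
  | nil => simp
  | cons a T ih =>
    have ha := val_of_not_cat (h a (by simp))
    have := ih (fun s hs => h s (by simp [hs]))
    simp only [List.map_cons, List.sum_cons, List.length_cons]
    rcases ha with ha | ha <;> rw [ha] <;> push_cast <;> omega

lemma sig_catfree (T : List Step) (h : ∀ s ∈ T, isCatB s = false) :
    sig T = List.replicate T.length none := by
  induction T with
  | nil => rfl
  | cons a T ih =>
    have ha := h a (by simp)
    have : stepSig a = none := by cases a <;> simp_all [isCatB, stepSig]
    simp [sig, this, ih (fun s hs => h s (by simp [hs])), List.replicate_succ]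
    simp [sig] at ih ⊢
    exact ih fun s hs => h s (by simp [hs])

/-- `hgt T T.length` for a list equals the full sum. -/
lemma hgt_full (T : List Step) : hgt T T.length = (T.map Step.val).sum := by
  simp [hgt]

/-! ### Suffix decomposition -/

lemma split_suffix (P : List Step) :
    ∃ A T, P = A ++ T ∧ (∀ s ∈ T, isCatB s = false) ∧
      (A = [] ∨ ∃ A' k, A = A' ++ [Step.C k]) := by
  induction P using List.reverseRecOn with
  | nil => exact ⟨[], [], rfl, by simp, Or.inl rfl⟩
  | append_singleton Q a ih =>
    cases ha : isCatB a
    · obtain ⟨A, T, rfl, hT, hA⟩ := ih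
      refine ⟨A, T ++ [a], by simp, ?_, hA⟩
      intro s hs
      rcases List.mem_append.1 hs with h | h
      · exact hT s h
      · simp at h; subst h; exact ha
    · cases a with
      | C k => exact ⟨Q ++ [Step.C k], [], by simp, by simp, Or.inr ⟨Q, k, rfl⟩⟩
      | U => simp [isCatB] at ha
      | D => simp [isCatB] at ha

/-! ### Building-block paths -/

lemma hgt_Upow (k i : ℕ) : hgt (Upow k) i = (min i k : ℕ) := by
  simp [hgt, Upow, List.take_replicate, Step.val]

lemma InE_UD : InE [Step.U, Step.D] := by
  refine ⟨?_, by simp [hgt, Step.val], ?_⟩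
  · intro i
    match i with
    | 0 => simp
    | 1 => simp [hgt, Step.val]
    | (n+2) =>
      rw [hgt_of_length_le _ _ (by simp)]
      simp [hgt, Step.val]
  · intro i k h
    match i with
    | 0 => simp at h
    | 1 => simp at h
    | (n+2) => rw [List.getElem?_eq_none (by simp)] at h; simp at h

lemma InE_UDpow (m : ℕ) : InE (UDpow m) := by
  induction m with
  | zero => exact InE_nil
  | succ n ih =>
    have : UDpow (n + 1) = UDpow n ++ [Step.U, Step.D] := by
      simp [UDpow, List.replicate_succ']
    rw [this]
    exact InE_append ih InE_UD

lemma InE_UpowC {k : ℕ} (hk : 2 ≤ k) : InE (Upow k ++ [Step.C k]) := by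
  have hlen : (Upow k).length = k := by simp [Upow]
  refine ⟨?_, ?_, ?_⟩
  · intro i
    rcases le_or_gt i k with h | h
    · rw [hgt_append_left _ _ _ (by omega), hgt_Upow]
      positivity
    · rw [hgt_of_length_le _ _ (by simp [hlen]; omega)]
      rw [hgt_length_append, hgt_Upow, hlen]
      simp [hgt, Step.val]
  · rw [hgt_length_append, hgt_Upow, hlen]
    simp [hgt, Step.val]
  · intro i k' h
    rcases lt_or_ge i k with hi | hi
    · rw [List.getElem?_append] at h
      simp only [hlen, hi, if_pos] at h
      simp [Upow, List.getElem?_replicate, hi] at h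
    · rcases eq_or_lt_of_le hi with rfl | hi'
      · rw [List.getElem?_append_right (by omega)] at h
        simp [hlen] at h
        subst h
        refine ⟨hk, ?_⟩
        rw [hgt_append_left _ _ _ (by omega), hgt_Upow]
        simp
      · rw [List.getElem?_eq_none (by simp [hlen]; omega)] at h
        simp at h

lemma sig_UDpow (m : ℕ) : sig (UDpow m) = List.replicate (2 * m) none := by
  have : ∀ s ∈ UDpow m, isCatB s = false := by
    intro s hs
    rw [UDpow, List.mem_flatten] at hs
    obtain ⟨l, hl, hsl⟩ := hs
    rw [List.eq_of_mem_replicate hl] at hsl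
    simp only [List.mem_cons, List.not_mem_nil, or_false] at hsl
    rcases hsl with rfl | rfl <;> rfl
  rw [sig_catfree _ this]
  congr 1
  simp [UDpow]
  ring

lemma sig_Upow (k : ℕ) : sig (Upow k) = List.replicate k none := by
  rw [sig_catfree]
  · simp [Upow]
  · intro s hs
    rw [List.eq_of_mem_replicate (show s ∈ List.replicate k Step.U from hs)]
    rfl

/-! ### Valid signatures -/

inductive VS : List (Option ℕ) → Prop
  | nil : VS []
  | pad (σ : List (Option ℕ)) : VS σ → VS (σ ++ [none, none])
  | cat (σ : List (Option ℕ)) (L k : ℕ) : VS σ → 2 ≤ k → k ≤ L → L % 2 = k % 2 →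
      VS (σ ++ List.replicate L none ++ [some k])

lemma VS_pads {σ : List (Option ℕ)} (h : VS σ) (r : ℕ) (hr : r % 2 = 0) :
    VS (σ ++ List.replicate r none) := by
  obtain ⟨m, rfl⟩ : ∃ m, r = 2 * m := ⟨r / 2, by omega⟩
  clear hr
  induction m with
  | zero => simpa using h
  | succ n ih =>
    have : List.replicate (2 * (n + 1)) (none : Option ℕ) =
        List.replicate (2 * n) none ++ [none, none] := by
      have : 2 * (n + 1) = 2 * n + 2 := by ring
      rw [this, List.replicate_add]
      rfl
    rw [this, ← List.append_assoc]
    exact VS.pad _ ih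

lemma VS_normalize {τ : List (Option ℕ)} (h : VS τ) :
    ∃ τ₀ r, τ = τ₀ ++ List.replicate r none ∧ VS τ₀ ∧ r % 2 = 0 ∧
      (τ₀ = [] ∨ ∃ ρ k, τ₀ = ρ ++ [some k]) := by
  induction h with
  | nil => exact ⟨[], 0, by simp, VS.nil, rfl, Or.inl rfl⟩
  | pad σ hσ ih =>
    obtain ⟨τ₀, r, rfl, h₀, hr, hend⟩ := ih
    refine ⟨τ₀, r + 2, ?_, h₀, by omega, hend⟩
    rw [List.append_assoc, List.replicate_add]
    rfl
  | cat σ L k hσ hk hkL hpar ih =>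
    exact ⟨σ ++ List.replicate L none ++ [some k], 0, by simp,
      VS.cat σ L k hσ hk hkL hpar, rfl, Or.inr ⟨σ ++ List.replicate L none, k, rfl⟩⟩

lemma VS_getLast_some {τ : List (Option ℕ)} (h : VS τ) {k : ℕ}
    (hl : τ.getLast? = some (some k)) :
    ∃ σ L, τ = σ ++ List.replicate L none ++ [some k] ∧ VS σ ∧ 2 ≤ k ∧ k ≤ L ∧
      L % 2 = k % 2 := by
  cases h with
  | nil => simp at hl
  | pad σ hσ =>
    rw [show σ ++ [none, none] = (σ ++ [none]) ++ [none] by simp,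
      List.getLast?_concat] at hl
    simp at hl
  | cat σ L k' hσ hk hkL hpar =>
    rw [List.getLast?_concat] at hl
    obtain rfl : k' = k := Option.some.inj (Option.some.inj hl)
    exact ⟨σ, L, rfl, hσ, hk, hkL, hpar⟩

lemma VS_getLast_none {τ : List (Option ℕ)} (h : VS τ)
    (hl : τ.getLast? = some none) :
    ∃ σ, τ = σ ++ [none, none] ∧ VS σ := by
  cases h with
  | nil => simp at hl
  | pad σ hσ => exact ⟨σ, rfl, hσ⟩
  | cat σ L k hσ hk hkL hpar =>
    rw [List.getLast?_concat] at hl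
    simp at hl

lemma VS_not_len_one {τ : List (Option ℕ)} (h : VS τ) : τ.length ≠ 1 := by
  cases h with
  | nil => simp
  | pad σ hσ => simp
  | cat σ L k hσ hk hkL hpar => simp; omega

/-! ### From valid signatures to paths -/

lemma exists_path {σ : List (Option ℕ)} (h : VS σ) : ∃ P, InE P ∧ sig P = σ := by
  induction h with
  | nil => exact ⟨[], InE_nil, rfl⟩
  | pad τ hτ ih =>
    obtain ⟨P, hP, hsig⟩ := ih
    refine ⟨P ++ [Step.U, Step.D], InE_append hP InE_UD, ?_⟩
    rw [sig_append, hsig]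
    rfl
  | cat τ L k hτ hk hkL hpar ih =>
    obtain ⟨P, hP, hsig⟩ := ih
    set m := (L - k) / 2 with hm
    have hLk : L = 2 * m + k := by omega
    refine ⟨P ++ (UDpow m ++ (Upow k ++ [Step.C k])),
      InE_append hP (InE_append (InE_UDpow m) (InE_UpowC hk)), ?_⟩
    rw [sig_append, sig_append, sig_append, hsig, sig_UDpow, sig_Upow]
    have : sig [Step.C k] = [some k] := rfl
    rw [this, ← List.append_assoc, ← List.append_assoc, List.append_assoc τ,
      ← List.replicate_add, hLk]

/-! ### From paths to valid signatures -/

lemma getElem?_append_left' {α : Type*} (A B : List α) {i : ℕ} (h : i < A.length) :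
    (A ++ B)[i]? = A[i]? := by
  rw [List.getElem?_append]; simp [h]

lemma getElem?_append_right' {α : Type*} (A B : List α) (j : ℕ) :
    (A ++ B)[A.length + j]? = B[j]? := by
  rw [List.getElem?_append_right (by omega)]; simp

lemma vs_of_InE : ∀ n (P : List Step), P.length ≤ n → InE P → VS (sig P) := by
  intro n
  induction n using Nat.strong_induction_on with
  | _ n ih =>
    intro P hlen h
    obtain ⟨A, T, rfl, hT, hA⟩ := split_suffix P
    rcases hA with rfl | ⟨A', k, rfl⟩
    · -- no catastrophes at all
      simp only [List.nil_append] at h hlen ⊢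
      obtain ⟨h1, h2, h3⟩ := h
      have hpar := catfree_sum_parity T hT
      rw [← hgt_full, h2] at hpar
      have heven : T.length % 2 = 0 := by omega
      have := VS_pads VS.nil T.length heven
      rw [List.nil_append] at this
      rwa [sig_catfree T hT]
    · -- last catastrophe is `C k`, followed by catastrophe-free `T`
      obtain ⟨B, S, rfl, hS, hB⟩ := split_suffix A'
      -- canonical association
      have hPeq : (B ++ S) ++ [Step.C k] ++ T = B ++ (S ++ ([Step.C k] ++ T)) := by
        simp [List.append_assoc]
      rw [hPeq] at h hlen ⊢
      set X := S ++ ([Step.C k] ++ T) with hX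
      obtain ⟨h1, h2, h3⟩ := h
      -- the catastrophe step sits at index B.length + S.length
      have hCk : (B ++ X)[B.length + S.length]? = some (Step.C k) := by
        rw [getElem?_append_right']
        simpa [hX] using getElem?_append_right' S ([Step.C k] ++ T) 0
      obtain ⟨hk2, hik⟩ := h3 _ _ hCk
      -- height is 0 right after each catastrophe; B ends at height 0
      have h0B : hgt (B ++ X) B.length = 0 := by
        rcases hB with rfl | ⟨B', k', rfl⟩
        · simp
        · have hCk' : (B' ++ ([Step.C k'] ++ X))[B'.length]? = some (Step.C k') := by
            simpa using getElem?_append_right' B' ([Step.C k'] ++ X) 0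
          rw [List.append_assoc] at h3 ⊢
          obtain ⟨hk2', hik'⟩ := h3 _ _ hCk'
          have hstep := hgt_succ (B' ++ ([Step.C k'] ++ X)) B'.length
          rw [hCk'] at hstep
          simp only [List.length_append, List.length_singleton]
          rw [hstep, hik']
          simp [Step.val]
      have hB0 : hgt B B.length = 0 := by
        rw [← hgt_append_left B X _ le_rfl]; exact h0B
      -- B is a Dyck path with catastrophes
      have hBInE : InE B := InE_prefix ⟨h1, h2, h3⟩ h0B
      -- S climbs from 0 to k
      have hSk : (S.map Step.val).sum = (k : ℤ) := by
        have hr := hgt_append_right B X S.length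
        rw [hik, hB0, zero_add] at hr
        rw [hX, hgt_append_left S _ _ le_rfl, hgt_full] at hr
        exact hr.symm
      have hkS : k ≤ S.length := by
        have := catfree_sum_le S hS
        rw [hSk] at this
        exact_mod_cast this
      have hparS : S.length % 2 = k % 2 := by
        have := catfree_sum_parity S hS
        rw [hSk] at this
        omega
      -- T has even length
      have hevenT : T.length % 2 = 0 := by
        have h2' := h2
        rw [hgt_full, hX, List.map_append, List.map_append, List.map_append,
          List.sum_append, List.sum_append, List.sum_append, ← hgt_full, hB0, hSk] at h2'
        have hTsum : (T.map Step.val).sum = 0 := by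
          simp [Step.val] at h2'
          linarith
        have := catfree_sum_parity T hT
        rw [hTsum] at this
        omega
      -- induction hypothesis applies to B
      have hBlt : B.length < n := by
        have : (B ++ X).length = B.length + (S.length + (1 + T.length)) := by
          simp [hX]; omega
        omega
      have hVSB : VS (sig B) := ih B.length hBlt B le_rfl hBInE
      -- assemble the valid signature
      have hcat := VS.cat (sig B) S.length k hVSB hk2 hkS hparS
      have hfin := VS_pads hcat T.length hevenT
      have hsig : sig (B ++ X) =
          sig B ++ List.replicate S.length none ++ [some k] ++ List.replicate T.length none := by
        have e1 := sig_catfree S hS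
        have e2 := sig_catfree T hT
        rw [hX]
        simp only [sig_append, e1, e2, List.append_assoc]
        rfl
      rw [hsig]
      simpa [List.append_assoc] using hfin

/-! ### Signatures and `CEquiv` -/

lemma stepSig_eq_some {s : Step} {k : ℕ} (h : stepSig s = some k) : s = Step.C k := by
  cases s <;> simp_all [stepSig]

lemma CEquiv_of_sig_eq {P Q : List Step} (h : sig P = sig Q) : CEquiv P Q := by
  intro k _ i
  have hs : (sig P)[i]? = (sig Q)[i]? := by rw [h]
  rw [sig_getElem?, sig_getElem?] at hs
  constructor
  · intro hP
    rw [hP] at hs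
    simp only [Option.map_some] at hs
    obtain ⟨b, hb, hsb⟩ := Option.map_eq_some_iff.mp hs.symm
    rw [hb, stepSig_eq_some hsb]
  · intro hQ
    rw [hQ] at hs
    simp only [Option.map_some] at hs
    obtain ⟨b, hb, hsb⟩ := Option.map_eq_some_iff.mp hs
    rw [hb, stepSig_eq_some hsb]

lemma sig_eq_of_CEquiv {P Q : List Step} (hP : InE P) (hQ : InE Q)
    (hlen : P.length = Q.length) (h : CEquiv P Q) : sig P = sig Q := by
  apply List.ext_getElem?
  intro i
  rw [sig_getElem?, sig_getElem?]
  rcases lt_or_ge i P.length with hi | hi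
  · have hiQ : i < Q.length := hlen ▸ hi
    obtain ⟨a, ha⟩ : ∃ a, P[i]? = some a := ⟨P[i], List.getElem?_eq_getElem hi⟩
    obtain ⟨b, hb⟩ : ∃ b, Q[i]? = some b := ⟨Q[i], List.getElem?_eq_getElem hiQ⟩
    rw [ha, hb]
    simp only [Option.map_some]
    congr 1
    cases a with
    | C k =>
      have hk2 := (hP.2.2 i k ha).1
      have := (h k hk2 i).mp ha
      rw [this] at hb
      rw [Option.some.inj hb]
    | U =>
      cases b with
      | C k' =>
        have hk2' := (hQ.2.2 i k' hb).1
        have := (h k' hk2' i).mpr hb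
        rw [this] at ha
        exact Step.noConfusion (Option.some.inj ha)
      | U => rfl
      | D => rfl
    | D =>
      cases b with
      | C k' =>
        have hk2' := (hQ.2.2 i k' hb).1
        have := (h k' hk2' i).mpr hb
        rw [this] at ha
        exact Step.noConfusion (Option.some.inj ha)
      | U => rfl
      | D => rfl
  · rw [List.getElem?_eq_none hi, List.getElem?_eq_none (hlen ▸ hi)]

/-! ### Counting classes via signatures -/

/-- The type of valid signatures of length `n`. -/
abbrev Sn (n : ℕ) : Type := {σ : List (Option ℕ) // VS σ ∧ σ.length = n}

lemma nClasses_eq_card_Sn (n : ℕ) : nClasses CEquiv n = Nat.card (Sn n) := by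
  apply Nat.card_eq_of_bijective
    (Quot.lift
      (fun P : {P : List Step // InE P ∧ P.length = n} =>
        (⟨sig P.1, vs_of_InE P.1.length P.1 le_rfl P.2.1, by simp [P.2.2]⟩ : Sn n))
      (fun a b hab => Subtype.ext (sig_eq_of_CEquiv a.2.1 b.2.1 (a.2.2.trans b.2.2.symm) hab)))
  constructor
  · intro x y
    induction x using Quot.ind with | _ a =>
    induction y using Quot.ind with | _ b =>
    intro hxy
    simp only [Quot.lift_mk] at hxy
    exact Quot.sound (CEquiv_of_sig_eq (congrArg Subtype.val hxy))
  · intro s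
    obtain ⟨P, hP, hsig⟩ := exists_path s.2.1
    have hlen : P.length = n := by
      have := s.2.2
      rw [← hsig] at this
      simpa using this
    exact ⟨Quot.mk _ ⟨P, hP, hlen⟩, Subtype.ext hsig⟩

instance : Unique (Sn 0) where
  default := ⟨[], VS.nil, rfl⟩
  uniq := fun σ => Subtype.ext (List.eq_nil_of_length_eq_zero σ.2.2)

instance : IsEmpty (Sn 1) :=
  ⟨fun σ => VS_not_len_one σ.2.1 σ.2.2⟩

/-! ### The bijection giving the recurrence -/

/-- The "last block" operation on signatures. -/
def glast (τ : List (Option ℕ)) : List (Option ℕ) :=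
  match τ.getLast? with
  | some (some k) => τ.dropLast ++ [none, some (k + 1)]
  | _ => τ ++ [some 2]

lemma glast_of_some {τ : List (Option ℕ)} {k : ℕ} (h : τ.getLast? = some (some k)) :
    glast τ = τ.dropLast ++ [none, some (k + 1)] := by
  simp [glast, h]

lemma glast_of_none {τ : List (Option ℕ)} (h : τ.getLast? = some none) :
    glast τ = τ ++ [some 2] := by
  simp [glast, h]

lemma glast_length {τ : List (Option ℕ)} (hne : τ ≠ []) :
    (glast τ).length = τ.length + 1 := by
  rcases hl : τ.getLast? with _ | (_ | k)
  · exact absurd (List.getLast?_eq_none_iff.mp hl) hne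
  · rw [glast_of_none hl]; simp
  · rw [glast_of_some hl]
    have : 1 ≤ τ.length := List.length_pos_iff.mpr hne
    simp
    omega

lemma eq_dropLast_concat {α : Type*} {l : List α} {a : α} (h : l.getLast? = some a) :
    l = l.dropLast ++ [a] := by
  have hne : l ≠ [] := by intro h'; subst h'; simp at h
  conv_lhs => rw [← List.dropLast_append_getLast hne]
  rw [List.getLast?_eq_getLast hne] at h
  simp [Option.some.inj h]

lemma glast_VS {τ : List (Option ℕ)} (h : VS τ) (hne : τ ≠ []) : VS (glast τ) := by
  rcases hl : τ.getLast? with _ | (_ | k)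
  · exact absurd (List.getLast?_eq_none_iff.mp hl) hne
  · -- last entry is `none`
    rw [glast_of_none hl]
    obtain ⟨τ₀, r, rfl, h₀, hr, hend⟩ := VS_normalize h
    have hrpos : r ≠ 0 := by
      rintro rfl
      simp at hl
      rcases hend with rfl | ⟨ρ, k', rfl⟩
      · simp at hl
      · rw [List.getLast?_concat] at hl
        simp at hl
    have hr2 : 2 ≤ r := by omega
    have := VS.cat τ₀ r 2 h₀ le_rfl hr2 (by omega)
    simpa [List.append_assoc] using this
  · -- last entry is `some k`
    rw [glast_of_some hl]
    obtain ⟨σ, L, heq, hσ, hk2, hkL, hpar⟩ := VS_getLast_some h hl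
    have hdrop : τ.dropLast = σ ++ List.replicate L none := by
      have : τ = (σ ++ List.replicate L none) ++ [some k] := by
        rw [heq, List.append_assoc]
      rw [this, List.dropLast_concat]
    rw [hdrop]
    have := VS.cat σ (L + 1) (k + 1) hσ (by omega) (by omega) (by omega)
    have hrep : List.replicate (L + 1) (none : Option ℕ) =
        List.replicate L none ++ [none] := List.replicate_succ'
    rw [hrep] at this
    simpa [List.append_assoc] using this

lemma getLast?_append_pair {α : Type*} (x : List α) (a b : α) :
    (x ++ [a, b]).getLast? = some b := by
  rw [show x ++ [a, b] = (x ++ [a]) ++ [b] by simp, List.getLast?_concat]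

lemma VS_last_cases {τ : List (Option ℕ)} (h : VS τ) (hne : τ ≠ []) :
    τ.getLast? = some none ∨ ∃ k, 2 ≤ k ∧ τ.getLast? = some (some k) := by
  rcases hl : τ.getLast? with _ | (_ | k)
  · exact absurd (List.getLast?_eq_none_iff.mp hl) hne
  · exact Or.inl rfl
  · obtain ⟨σ, L, _, _, hk2, _, _⟩ := VS_getLast_some h hl
    exact Or.inr ⟨k, hk2, rfl⟩

lemma Sn_ne_nil {m : ℕ} (τ : Sn (m + 1)) : τ.1 ≠ [] := by
  intro h
  have := τ.2.2
  rw [h] at this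
  simp at this

/-- The bijection `Sn (m+1) ⊕ Sn m ≃ Sn (m+2)`. -/
def gfun (m : ℕ) : Sn (m + 1) ⊕ Sn m → Sn (m + 2)
  | Sum.inl τ => ⟨glast τ.1, glast_VS τ.2.1 (Sn_ne_nil τ),
      by rw [glast_length (Sn_ne_nil τ), τ.2.2]⟩
  | Sum.inr σ => ⟨σ.1 ++ [none, none], VS.pad _ σ.2.1, by simp [σ.2.2]⟩

lemma glast_getLast? {τ : List (Option ℕ)} (h : VS τ) (hne : τ ≠ []) :
    ∃ t, (glast τ).getLast? = some (some t) ∧ 2 ≤ t := by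
  rcases VS_last_cases h hne with hl | ⟨k, hk2, hl⟩
  · rw [glast_of_none hl, List.getLast?_concat]
    exact ⟨2, rfl, le_rfl⟩
  · rw [glast_of_some hl, getLast?_append_pair]
    exact ⟨k + 1, rfl, by omega⟩

lemma gfun_inj (m : ℕ) : Function.Injective (gfun m) := by
  rintro (τ | σ) (τ' | σ') h
  · -- inl / inl
    have hv : glast τ.1 = glast τ'.1 := congrArg Subtype.val h
    rcases VS_last_cases τ.2.1 (Sn_ne_nil τ) with h1 | ⟨k, hk2, h1⟩ <;>
      rcases VS_last_cases τ'.2.1 (Sn_ne_nil τ') with h2 | ⟨k', hk2', h2⟩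
    · rw [glast_of_none h1, glast_of_none h2] at hv
      exact congrArg Sum.inl (Subtype.ext (List.append_cancel_right hv))
    · rw [glast_of_none h1, glast_of_some h2] at hv
      have := congrArg List.getLast? hv
      rw [List.getLast?_concat, getLast?_append_pair] at this
      have : (2 : ℕ) = k' + 1 := by
        have := Option.some.inj (Option.some.inj this)
        exact_mod_cast this
      omega
    · rw [glast_of_some h1, glast_of_none h2] at hv
      have := congrArg List.getLast? hv
      rw [List.getLast?_concat, getLast?_append_pair] at this
      have : k + 1 = (2 : ℕ) := Option.some.inj (Option.some.inj this)
      omega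
    · rw [glast_of_some h1, glast_of_some h2] at hv
      have hk : k = k' := by
        have := congrArg List.getLast? hv
        rw [getLast?_append_pair, getLast?_append_pair] at this
        have := Option.some.inj (Option.some.inj this)
        omega
      subst hk
      have hdrop : τ.1.dropLast = τ'.1.dropLast := List.append_cancel_right hv
      have : τ.1 = τ'.1 := by
        rw [eq_dropLast_concat h1, eq_dropLast_concat h2, hdrop]
      exact congrArg Sum.inl (Subtype.ext this)
  · -- inl / inr
    exfalso
    have hv : glast τ.1 = σ'.1 ++ [none, none] := congrArg Subtype.val h
    obtain ⟨t, ht, _⟩ := glast_getLast? τ.2.1 (Sn_ne_nil τ)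
    rw [hv, getLast?_append_pair] at ht
    simp at ht
  · -- inr / inl
    exfalso
    have hv : σ.1 ++ [none, none] = glast τ'.1 := congrArg Subtype.val h
    obtain ⟨t, ht, _⟩ := glast_getLast? τ'.2.1 (Sn_ne_nil τ')
    rw [← hv, getLast?_append_pair] at ht
    simp at ht
  · -- inr / inr
    have hv : σ.1 ++ [none, none] = σ'.1 ++ [none, none] := congrArg Subtype.val h
    exact congrArg Sum.inr (Subtype.ext (List.append_cancel_right hv))

lemma gfun_surj (m : ℕ) : Function.Surjective (gfun m) := by
  rintro ⟨υ, hVS, hlen⟩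
  have hne : υ ≠ [] := by
    intro h; rw [h] at hlen; simp at hlen
  rcases VS_last_cases hVS hne with hl | ⟨k, hk2, hl⟩
  · obtain ⟨σ', rfl, hσ'⟩ := VS_getLast_none hVS hl
    have hlen' : σ'.length = m := by simp at hlen; omega
    exact ⟨Sum.inr ⟨σ', hσ', hlen'⟩, rfl⟩
  · obtain ⟨σ, L, heq, hσ, hk2', hkL, hpar⟩ := VS_getLast_some hVS hl
    subst heq
    have hlenσ : σ.length + L + 1 = m + 2 := by simp at hlen; omega
    rcases eq_or_lt_of_le hk2 with rfl | hk3
    · -- k = 2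
      set τ : List (Option ℕ) := σ ++ List.replicate L none with hτ
      have hVSτ : VS τ := VS_pads hσ L (by omega)
      have hlτ : τ.length = m + 1 := by simp [hτ]; omega
      refine ⟨Sum.inl ⟨τ, hVSτ, hlτ⟩, Subtype.ext ?_⟩
      have hgl : τ.getLast? = some none := by
        have : τ = (σ ++ List.replicate (L - 1) none) ++ [none] := by
          rw [hτ, List.append_assoc]
          congr 1
          rw [← List.replicate_succ' (n := L-1)]
          congr 1
          omega
        rw [this, List.getLast?_concat]
      show glast τ = σ ++ List.replicate L none ++ [some 2]
      rw [glast_of_none hgl, hτ, List.append_assoc]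
    · -- k ≥ 3
      set τ : List (Option ℕ) := σ ++ List.replicate (L - 1) none ++ [some (k - 1)] with hτ
      have hVSτ : VS τ := by
        have := VS.cat σ (L - 1) (k - 1) hσ (by omega) (by omega) (by omega)
        rw [hτ]
        exact this
      have hlτ : τ.length = m + 1 := by simp [hτ]; omega
      refine ⟨Sum.inl ⟨τ, hVSτ, hlτ⟩, Subtype.ext ?_⟩
      have hassoc : τ = (σ ++ List.replicate (L - 1) none) ++ [some (k - 1)] := by
        rw [hτ, List.append_assoc]
      have hgl : τ.getLast? = some (some (k - 1)) := by
        rw [hassoc, List.getLast?_concat]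
      show glast τ = σ ++ List.replicate L none ++ [some k]
      rw [glast_of_some hgl, hassoc, List.dropLast_concat]
      have h1 : k - 1 + 1 = k := by omega
      have h2 : List.replicate L (none : Option ℕ) =
          List.replicate (L - 1) none ++ [none] := by
        rw [← List.replicate_succ']
        congr 1
        omega
      rw [h1, h2]
      simp [List.append_assoc]

lemma finite_Sn : ∀ n, Finite (Sn n) := by
  intro n
  induction n using Nat.strong_induction_on with
  | _ n ih =>
    match n with
    | 0 => exact Finite.of_subsingleton
    | 1 => exact Finite.of_subsingleton
    | (m + 2) =>
      have h1 : Finite (Sn (m + 1)) := ih (m + 1) (by omega)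
      have h0 : Finite (Sn m) := ih m (by omega)
      exact Finite.of_surjective (gfun m) (gfun_surj m)

lemma card_rec (m : ℕ) :
    Nat.card (Sn (m + 2)) = Nat.card (Sn (m + 1)) + Nat.card (Sn m) := by
  haveI := finite_Sn (m + 1)
  haveI := finite_Sn m
  rw [← Nat.card_sum]
  exact (Nat.card_eq_of_bijective (gfun m) ⟨gfun_inj m, gfun_surj m⟩).symm

/-- The number `c n` of C-equivalence classes of paths of length `n` in ℰ
satisfies `c 0 = 1`, `c 1 = 0` and the Fibonacci-like recurrence
`c n = c (n-1) + c (n-2)` for `n ≥ 2`. -/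
theorem count_CEquiv_classes :
    nClasses CEquiv 0 = 1 ∧ nClasses CEquiv 1 = 0 ∧
    ∀ n, 2 ≤ n → nClasses CEquiv n = nClasses CEquiv (n - 1) + nClasses CEquiv (n - 2) := by
  refine ⟨?_, ?_, ?_⟩
  · rw [nClasses_eq_card_Sn]
    exact Nat.card_unique
  · rw [nClasses_eq_card_Sn]
    exact Nat.card_of_isEmpty
  · intro n hn
    obtain ⟨m, rfl⟩ : ∃ m, n = m + 2 := ⟨n - 2, by omega⟩
    have h1 : m + 2 - 1 = m + 1 := by omega
    have h2 : m + 2 - 2 = m := by omega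
    rw [h1, h2, nClasses_eq_card_Sn, nClasses_eq_card_Sn, nClasses_eq_card_Sn]
    exact card_rec m
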